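/- Let q be a prime with q ≡ 1 (mod 4), G = ℤ_q, and let A = {0} ∪ {x ∈ ℤ_q : x is a nonzero quadratic residue mod q}. Then A is a standard set and λ(A) = λ±(A) = 1/√q. -/

import Mathlib

open scoped Pointwise ComplexOrder

noncomputable section

def IsStandard {G : Type*} [AddCommGroup G] (A : Set G) : Prop :=
  A = -A ∧ (0 : G) ∈ A

def Delta {G : Type*} [AddCommGroup G] (A : Set G) : ℕ :=
  sSup {n | ∃ B : Finset G, ((B : Set G) - (B : Set G)) ∩ A = {0} ∧ B.card = n}

def DeltaBar {G : Type*} [AddCommGroup G] (A : Set G) : ℕ :=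
  sSup {n | ∃ B : Finset G, ((B : Set G) - (B : Set G)) ⊆ A ∧ B.card = n}

def deltaL {G : Type*} [AddCommGroup G] [Fintype G] (A : Set G) : ℝ :=
  (Delta A : ℝ) / (Fintype.card G : ℝ)

def deltaU {G : Type*} [AddCommGroup G] (A : Set G) : ℝ :=
  1 / (DeltaBar A : ℝ)

def ftrans {G : Type*} [AddCommGroup G] [Fintype G] (f : G → ℝ) (γ : AddChar G Circle) : ℂ :=
  ∑ x, (γ x : ℂ) * (f x : ℂ)

def PosFT {G : Type*} [AddCommGroup G] [Fintype G] (f : G → ℝ) : Prop :=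
  ∀ γ : AddChar G Circle, 0 ≤ ftrans f γ

def lamSet {G : Type*} [AddCommGroup G] [Fintype G] (S : Set (G → ℝ)) : Set ℝ :=
  {r | ∃ f ∈ S, PosFT f ∧ (∑ x, f x) ≠ 0 ∧ r = f 0 / ∑ x, f x}

def lam {G : Type*} [AddCommGroup G] [Fintype G] (A : Set G) : ℝ :=
  sInf (lamSet {f | f ≠ 0 ∧ ∀ x ∉ A, f x = 0})

def lamMinus {G : Type*} [AddCommGroup G] [Fintype G] (A : Set G) : ℝ :=
  sInf (lamSet {f | f ≠ 0 ∧ ∀ x ∉ A, f x ≤ 0})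

def lamPlus {G : Type*} [AddCommGroup G] [Fintype G] (A : Set G) : ℝ :=
  sInf (lamSet {f | f ≠ 0 ∧ (∀ x ∉ A, f x = 0) ∧ ∀ x ∈ A, 0 ≤ f x})

def lamPM {G : Type*} [AddCommGroup G] [Fintype G] (A : Set G) : ℝ :=
  sInf (lamSet {f | f ≠ 0 ∧ (∀ x ∉ A, f x ≤ 0) ∧ ∀ x ∈ A, 0 ≤ f x})

section Aux
open Finset

variable {q : ℕ} [Fact (Nat.Prime q)]

lemma char_ne_two (hq4 : q % 4 = 1) : ringChar (ZMod q) ≠ 2 := by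
  rw [ZMod.ringChar_zmod_n]; omega

lemma chiC_ne_one (hq4 : q % 4 = 1) :
    (quadraticChar (ZMod q)).ringHomComp (Int.castRingHom ℂ) ≠ 1 := fun h =>
  quadraticChar_ne_one (char_ne_two hq4)
    ((MulChar.ringHomComp_eq_one_iff (RingHom.injective_int _)).mp h)

lemma gauss_pm (hq4 : q % 4 = 1) (γ : AddChar (ZMod q) Circle) (hγ : γ ≠ 1) :
    (∑ x : ZMod q, (γ x : ℂ) * ((quadraticChar (ZMod q) x : ℤ) : ℂ)) = Real.sqrt q ∨
    (∑ x : ZMod q, (γ x : ℂ) * ((quadraticChar (ZMod q) x : ℤ) : ℂ)) = -Real.sqrt q := by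
  set χC := (quadraticChar (ZMod q)).ringHomComp (Int.castRingHom ℂ) with hχC
  set ψ := Circle.coeHom.compAddChar γ with hψ
  have hψ1 : ψ ≠ 1 := by
    rcases AddChar.ne_one_iff.mp hγ with ⟨x, hx⟩
    refine AddChar.ne_one_iff.mpr ⟨x, fun h => hx ?_⟩
    rw [hψ] at h
    exact Circle.ext (by simp only [MonoidHom.compAddChar_apply] at h; exact h)
  have hprim : ψ.IsPrimitive := AddChar.IsPrimitive.of_ne_one hψ1
  have hsq : gaussSum χC ψ ^ 2 = χC (-1) * (Fintype.card (ZMod q)) :=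
    gaussSum_sq (chiC_ne_one hq4) ((quadraticChar_isQuadratic (ZMod q)).comp _) hprim
  have hm1 : χC (-1) = 1 := by
    have hs : IsSquare (-1 : ZMod q) := ZMod.exists_sq_eq_neg_one_iff.2 (by omega)
    have h1 : quadraticChar (ZMod q) (-1) = 1 :=
      (quadraticChar_one_iff_isSquare (neg_ne_zero.mpr one_ne_zero)).2 hs
    simp [hχC, MulChar.ringHomComp_apply, h1]
  have hG : gaussSum χC ψ ^ 2 = (q : ℂ) := by
    rw [hsq, hm1, one_mul, ZMod.card]
  have heq : (∑ x : ZMod q, (γ x : ℂ) * ((quadraticChar (ZMod q) x : ℤ) : ℂ)) = gaussSum χC ψ := by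
    rw [gaussSum]
    exact Finset.sum_congr rfl fun x _ => by rw [mul_comm]; rfl
  rw [heq]
  have h2 : (Real.sqrt q : ℂ) ^ 2 = (q : ℂ) := by
    rw [← Complex.ofReal_pow, Real.sq_sqrt (by positivity)]
    norm_cast
  have h0 : (gaussSum χC ψ - Real.sqrt q) * (gaussSum χC ψ + Real.sqrt q) = 0 := by
    calc (gaussSum χC ψ - Real.sqrt q) * (gaussSum χC ψ + Real.sqrt q)
        = gaussSum χC ψ ^ 2 - (Real.sqrt q : ℂ) ^ 2 := by ring
      _ = 0 := by rw [hG, h2]; ring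
  rcases mul_eq_zero.mp h0 with h | h
  · left; linear_combination h
  · right; linear_combination h

def wit (q : ℕ) [Fact (Nat.Prime q)] (ε : ℝ) : ZMod q → ℝ := fun x =>
  (if x = 0 then Real.sqrt q else 0) + 1 + ε * (quadraticChar (ZMod q) x : ℝ)

lemma ftrans_wit (ε : ℝ) (γ : AddChar (ZMod q) Circle) :
    ftrans (wit q ε) γ = (Real.sqrt q : ℂ) + (∑ x : ZMod q, (γ x : ℂ))
      + (ε : ℂ) * ∑ x : ZMod q, (γ x : ℂ) * ((quadraticChar (ZMod q) x : ℤ) : ℂ) := by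
  unfold ftrans wit
  have h1 : ∑ x : ZMod q, (γ x : ℂ) *
        (((if x = 0 then Real.sqrt q else 0) + 1 + ε * (quadraticChar (ZMod q) x : ℝ) : ℝ) : ℂ)
      = ∑ x : ZMod q, ((if x = 0 then (Real.sqrt q : ℂ) * (γ x : ℂ) else 0) + (γ x : ℂ)
          + (ε : ℂ) * ((γ x : ℂ) * ((quadraticChar (ZMod q) x : ℤ) : ℂ))) := by
    refine Finset.sum_congr rfl fun x _ => ?_
    by_cases hx : x = 0 <;> simp [hx] <;> push_cast <;> ring
  rw [h1, Finset.sum_add_distrib, Finset.sum_add_distrib, ← Finset.mul_sum,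
    Finset.sum_ite_eq' Finset.univ (0 : ZMod q) (fun x => (Real.sqrt q : ℂ) * (γ x : ℂ))]
  simp

lemma sum_chi_zero (hq4 : q % 4 = 1) :
    ∑ x : ZMod q, ((quadraticChar (ZMod q) x : ℤ) : ℂ) = 0 := by
  have := quadraticChar_sum_zero (char_ne_two (q := q) hq4)
  have h2 : ((∑ x : ZMod q, quadraticChar (ZMod q) x : ℤ) : ℂ) = 0 := by rw [this]; simp
  rw [← h2]; push_cast; rfl

lemma ftrans_wit_one (hq4 : q % 4 = 1) (ε : ℝ) :
    ftrans (wit q ε) 1 = ((Real.sqrt q + q : ℝ) : ℂ) := by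
  rw [ftrans_wit]
  have h1 : ∑ x : ZMod q, ((1 : AddChar (ZMod q) Circle) x : ℂ) = (q : ℂ) := by
    simp [ZMod.card]
  have h2 : ∑ x : ZMod q, ((1 : AddChar (ZMod q) Circle) x : ℂ)
      * ((quadraticChar (ZMod q) x : ℤ) : ℂ) = 0 := by
    simpa using sum_chi_zero (q := q) hq4
  rw [h1, h2]
  push_cast
  ring

lemma ftrans_wit_ne_one (hq4 : q % 4 = 1) {ε : ℝ} (hε : ε = 1 ∨ ε = -1)
    (γ : AddChar (ZMod q) Circle) (hγ : γ ≠ 1) :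
    ftrans (wit q ε) γ = 0 ∨ ftrans (wit q ε) γ = ((2 * Real.sqrt q : ℝ) : ℂ) := by
  have hsum : (∑ x : ZMod q, (γ x : ℂ)) = 0 := by
    have hψ1 : Circle.coeHom.compAddChar γ ≠ 1 := by
      rcases AddChar.ne_one_iff.mp hγ with ⟨x, hx⟩
      refine AddChar.ne_one_iff.mpr ⟨x, fun h => hx ?_⟩
      exact Circle.ext (by simp only [MonoidHom.compAddChar_apply] at h; exact h)
    have := AddChar.sum_eq_zero_of_ne_one hψ1
    exact this
  rw [ftrans_wit, hsum]
  rcases gauss_pm hq4 γ hγ with h | h <;> rw [h] <;> rcases hε with rfl | rfl <;>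
    [right; left; left; right] <;> push_cast <;> ring

lemma orth (b : ZMod q) :
    ∑ t : ZMod q, ZMod.stdAddChar (t * b) = if b = 0 then (q : ℂ) else 0 := by
  classical
  simpa [ZMod.card] using AddChar.sum_mulShift b (ZMod.isPrimitive_stdAddChar q)

lemma plancherel (f g : ZMod q → ℝ) :
    ∑ t : ZMod q, (ftrans f ((ZMod.toCircle).mulShift t)) *
        (ftrans g ((ZMod.toCircle).mulShift (-t)))
      = (q : ℂ) * ∑ x : ZMod q, (f x : ℂ) * (g x : ℂ) := by
  classical
  have hcoe : ∀ t x : ZMod q, (((ZMod.toCircle).mulShift t x : Circle) : ℂ)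
      = ZMod.stdAddChar (t * x) := fun t x => by rw [AddChar.mulShift_apply]; rfl
  calc ∑ t : ZMod q, (ftrans f ((ZMod.toCircle).mulShift t)) *
        (ftrans g ((ZMod.toCircle).mulShift (-t)))
      = ∑ t : ZMod q, ∑ x : ZMod q, ∑ y : ZMod q,
          (f x : ℂ) * (g y : ℂ) * ZMod.stdAddChar (t * (x - y)) := by
        refine Finset.sum_congr rfl fun t _ => ?_
        rw [ftrans, ftrans, Finset.sum_mul_sum]
        refine Finset.sum_congr rfl fun x _ => Finset.sum_congr rfl fun y _ => ?_
        rw [hcoe, hcoe]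
        have : ZMod.stdAddChar (t * x) * ZMod.stdAddChar (-t * y)
            = ZMod.stdAddChar (t * (x - y)) := by
          rw [← AddChar.map_add_eq_mul]
          congr 1
          ring
        calc ZMod.stdAddChar (t*x) * (f x : ℂ) * (ZMod.stdAddChar (-t*y) * (g y : ℂ))
            = (f x : ℂ) * (g y : ℂ) * (ZMod.stdAddChar (t*x) * ZMod.stdAddChar (-t*y)) := by ring
          _ = _ := by rw [this]
    _ = ∑ x : ZMod q, ∑ y : ZMod q, (f x : ℂ) * (g y : ℂ) * ∑ t : ZMod q,
          ZMod.stdAddChar (t * (x - y)) := by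
        rw [Finset.sum_comm]
        refine Finset.sum_congr rfl fun x _ => ?_
        rw [Finset.sum_comm]
        exact Finset.sum_congr rfl fun y _ => (Finset.mul_sum _ _ _).symm
    _ = ∑ x : ZMod q, (f x : ℂ) * (g x : ℂ) * q := by
        refine Finset.sum_congr rfl fun x _ => ?_
        have : ∀ y : ZMod q, (f x : ℂ) * (g y : ℂ) * ∑ t : ZMod q, ZMod.stdAddChar (t * (x - y))
            = if y = x then (f x : ℂ) * (g y : ℂ) * q else 0 := by
          intro y
          rw [orth]
          by_cases hy : y = x
          · simp [hy]
          · have : ¬(x - y = 0) := fun h => hy (by linear_combination -h)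
            simp [this, hy]
        rw [Finset.sum_congr rfl fun y _ => this y,
          Finset.sum_ite_eq' Finset.univ x (fun y => (f x : ℂ) * (g y : ℂ) * q)]
        simp
    _ = (q : ℂ) * ∑ x : ZMod q, (f x : ℂ) * (g x : ℂ) := by
        rw [Finset.mul_sum]
        exact Finset.sum_congr rfl fun x _ => by ring

lemma ftrans_one (f : ZMod q → ℝ) :
    ftrans f 1 = ((∑ x : ZMod q, f x : ℝ) : ℂ) := by
  unfold ftrans
  push_cast
  simp

lemma sqrt_pos_q : 0 < Real.sqrt q := by
  have : 0 < q := (Fact.out : Nat.Prime q).pos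
  positivity

lemma sqrt_mul_self_q : Real.sqrt q * Real.sqrt q = q :=
  Real.mul_self_sqrt (by positivity)

lemma wit_values (ε : ℝ) (x : ZMod q) :
    wit q ε x = (if x = 0 then Real.sqrt q else 0) + 1 + ε * (quadraticChar (ZMod q) x : ℝ) := rfl

lemma lower_bound (hq4 : q % 4 = 1) (f : ZMod q → ℝ)
    (hneg : ∀ x, quadraticChar (ZMod q) x = -1 → f x ≤ 0)
    (hpos : ∀ γ : AddChar (ZMod q) Circle, 0 ≤ ftrans f γ)
    (hS : (∑ x : ZMod q, f x) ≠ 0) :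
    1 / Real.sqrt q ≤ f 0 / ∑ x : ZMod q, f x := by
  classical
  set s := Real.sqrt q with hs
  have hs0 : 0 < s := sqrt_pos_q
  have hss : s * s = q := sqrt_mul_self_q
  set g := wit q (-1) with hg
  -- positivity of g's Fourier transform
  have hgpos : ∀ γ : AddChar (ZMod q) Circle, 0 ≤ ftrans g γ := by
    intro γ
    by_cases hγ : γ = 1
    · rw [hγ, ftrans_wit_one hq4]
      rw [Complex.zero_le_real]
      positivity
    · rcases ftrans_wit_ne_one hq4 (Or.inr rfl) γ hγ with h | h
      · rw [h]
      · rw [h, Complex.zero_le_real]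
        positivity
  -- sum bound via Plancherel
  have hterm : ∀ t : ZMod q, (0:ℂ) ≤ (ftrans f ((ZMod.toCircle).mulShift t)) *
      (ftrans g ((ZMod.toCircle).mulShift (-t))) := fun t => mul_nonneg (hpos _) (hgpos _)
  have hshift0 : (ZMod.toCircle (N := q)).mulShift 0 = 1 := AddChar.mulShift_zero _
  have hsingle : ftrans f 1 * ftrans g 1 ≤ ∑ t : ZMod q,
      (ftrans f ((ZMod.toCircle).mulShift t)) * (ftrans g ((ZMod.toCircle).mulShift (-t))) := by
    have := Finset.single_le_sum (f := fun t : ZMod q =>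
      (ftrans f ((ZMod.toCircle).mulShift t)) * (ftrans g ((ZMod.toCircle).mulShift (-t))))
      (fun t _ => hterm t) (Finset.mem_univ (0 : ZMod q))
    simpa [hshift0] using this
  rw [plancherel] at hsingle
  -- compute the pieces
  have hf1 : ftrans f 1 = ((∑ x : ZMod q, f x : ℝ) : ℂ) := ftrans_one f
  have hg1 : ftrans g 1 = ((s + q : ℝ) : ℂ) := ftrans_wit_one hq4 (-1)
  have hfg : ∑ x : ZMod q, (f x : ℂ) * (g x : ℂ) = ((∑ x : ZMod q, f x * g x : ℝ) : ℂ) := by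
    push_cast; rfl
  rw [hf1, hg1, hfg] at hsingle
  have hreal : (∑ x : ZMod q, f x) * (s + q) ≤ q * ∑ x : ZMod q, f x * g x := by
    refine Complex.real_le_real.mp ?_
    rw [Complex.ofReal_mul, Complex.ofReal_mul]
    exact_mod_cast hsingle
  -- pointwise bound on ∑ f * g
  have hsum_fg : ∑ x : ZMod q, f x * g x ≤ (s + 1) * f 0 := by
    have hbound : ∀ x : ZMod q, f x * g x ≤ if x = 0 then (s + 1) * f 0 else 0 := by
      intro x
      by_cases hx : x = 0
      · have : g x = s + 1 := by
          rw [hg, wit_values, hx]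
          simp [quadraticChar_zero, hs]
        rw [this, hx]
        simp [mul_comm]
      · rcases quadraticChar_dichotomy hx with h1 | h1
        · have : g x = 0 := by rw [hg, wit_values]; simp [hx, h1]
          simp [this, hx]
        · have hgx : g x = 2 := by rw [hg, wit_values]; simp [hx, h1]; ring
          have := hneg x h1
          simp only [hx, if_false]
          nlinarith
    calc ∑ x : ZMod q, f x * g x ≤ ∑ x : ZMod q, if x = 0 then (s + 1) * f 0 else 0 :=
          Finset.sum_le_sum fun x _ => hbound x
      _ = (s + 1) * f 0 := by
          rw [Finset.sum_ite_eq' Finset.univ (0 : ZMod q) (fun _ => (s + 1) * f 0)]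
          simp
  -- positivity of ∑ f
  have hSpos : 0 < ∑ x : ZMod q, f x := by
    have := hpos 1
    rw [ftrans_one, Complex.zero_le_real] at this
    exact lt_of_le_of_ne this (Ne.symm hS)
  -- combine
  have hkey : ∑ x : ZMod q, f x ≤ s * f 0 := by
    have hc : 0 < s * (1 + s) := by positivity
    have h2 : (q : ℝ) * ∑ x : ZMod q, f x * g x ≤ q * ((s + 1) * f 0) := by
      have hq0 : (0:ℝ) ≤ q := by positivity
      exact mul_le_mul_of_nonneg_left hsum_fg hq0
    have h3 : (∑ x : ZMod q, f x) * (s + s * s) ≤ s * s * ((s + 1) * f 0) := by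
      rw [hss]
      exact le_trans hreal h2
    have h4 : s * (1 + s) * (∑ x : ZMod q, f x) ≤ s * (1 + s) * (s * f 0) := by
      calc s * (1 + s) * (∑ x : ZMod q, f x) = (∑ x : ZMod q, f x) * (s + s * s) := by ring
        _ ≤ s * s * ((s + 1) * f 0) := h3
        _ = s * (1 + s) * (s * f 0) := by ring
    exact le_of_mul_le_mul_left h4 hc
  rw [div_le_div_iff₀ hs0 hSpos]
  nlinarith [hkey]

lemma not_mem_A_iff (x : ZMod q) :
    x ∉ ({0} ∪ {x : ZMod q | x ≠ 0 ∧ ∃ y : ZMod q, x = y ^ 2} : Set (ZMod q)) ↔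
      quadraticChar (ZMod q) x = -1 := by
  simp only [Set.mem_union, Set.mem_singleton_iff, Set.mem_setOf_eq, not_or, not_and, not_exists]
  constructor
  · rintro ⟨hx0, hsq⟩
    rw [quadraticChar_neg_one_iff_not_isSquare]
    rintro ⟨r, hr⟩
    exact hsq hx0 r (by rw [hr]; ring)
  · intro h
    have hx0 : x ≠ 0 := by
      intro h0
      rw [h0, quadraticChar_zero] at h
      norm_num at h
    refine ⟨hx0, fun _ y hy => ?_⟩
    have : IsSquare x := ⟨y, by rw [hy]; ring⟩
    rw [quadraticChar_neg_one_iff_not_isSquare] at h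
    exact h this

lemma mem_A_iff (x : ZMod q) :
    x ∈ ({0} ∪ {x : ZMod q | x ≠ 0 ∧ ∃ y : ZMod q, x = y ^ 2} : Set (ZMod q)) ↔
      x = 0 ∨ quadraticChar (ZMod q) x = 1 := by
  by_cases hx : x = 0
  · simp [hx]
  · rw [← not_iff_not, not_mem_A_iff]
    simp only [hx, false_or]
    rcases quadraticChar_dichotomy hx with h | h <;> simp [h]

lemma wit_one_nonneg (x : ZMod q) : 0 ≤ wit q 1 x := by
  rw [wit_values]
  rcases eq_or_ne x 0 with hx | hx
  · simp [hx, quadraticChar_zero]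
    positivity
  · rcases quadraticChar_dichotomy hx with h | h <;> simp [hx, h]

lemma wit_one_zero : wit q 1 0 = Real.sqrt q + 1 := by
  rw [wit_values]; simp [quadraticChar_zero]

lemma wit_one_ne_zero : wit q 1 ≠ 0 := by
  intro h
  have := congr_fun h 0
  rw [wit_one_zero] at this
  have h2 : (0:ℝ) ≤ Real.sqrt q := Real.sqrt_nonneg _
  simp only [Pi.zero_apply] at this
  linarith

lemma wit_one_sum (hq4 : q % 4 = 1) :
    ∑ x : ZMod q, wit q 1 x = Real.sqrt q + q := by
  have h1 := ftrans_one (wit q 1)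
  have h2 := ftrans_wit_one (q := q) hq4 1
  rw [h1] at h2
  exact_mod_cast h2

lemma wit_one_ratio (hq4 : q % 4 = 1) :
    1 / Real.sqrt q = wit q 1 0 / ∑ x : ZMod q, wit q 1 x := by
  rw [wit_one_sum hq4, wit_one_zero]
  have hs0 : 0 < Real.sqrt q := sqrt_pos_q
  have hss : Real.sqrt q * Real.sqrt q = q := sqrt_mul_self_q
  have hq_pos : (0:ℝ) < q := by nlinarith
  rw [div_eq_div_iff (ne_of_gt hs0) (ne_of_gt (by positivity))]
  linear_combination (-1 : ℝ) * hss

lemma wit_one_posft (hq4 : q % 4 = 1) (γ : AddChar (ZMod q) Circle) :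
    0 ≤ ftrans (wit q 1) γ := by
  by_cases hγ : γ = 1
  · rw [hγ, ftrans_wit_one hq4, Complex.zero_le_real]
    positivity
  · rcases ftrans_wit_ne_one hq4 (Or.inl rfl) γ hγ with h | h
    · rw [h]
    · rw [h, Complex.zero_le_real]
      positivity

lemma wit_one_sum_ne (hq4 : q % 4 = 1) : (∑ x : ZMod q, wit q 1 x) ≠ 0 := by
  rw [wit_one_sum hq4]
  have := sqrt_pos_q (q := q)
  positivity

end Aux

theorem stmt9 (q : ℕ) [Fact (Nat.Prime q)] (hq4 : q % 4 = 1)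
    (A : Set (ZMod q))
    (hA : A = {0} ∪ {x : ZMod q | x ≠ 0 ∧ ∃ y : ZMod q, x = y ^ 2}) :
    IsStandard A ∧
    lam A = 1 / Real.sqrt q ∧
    lamPM A = 1 / Real.sqrt q := by
  classical
  have hA' : ∀ x : ZMod q, x ∉ A ↔ quadraticChar (ZMod q) x = -1 := by
    intro x; rw [hA]; exact not_mem_A_iff x
  have hAmem : ∀ x : ZMod q, x ∈ A ↔ x = 0 ∨ quadraticChar (ZMod q) x = 1 := by
    intro x; rw [hA]; exact mem_A_iff x
  have hwit_supp : ∀ x ∉ A, wit q 1 x = 0 := by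
    intro x hx
    have h := (hA' x).mp hx
    have hx0 : x ≠ 0 := by
      intro h0
      rw [h0, quadraticChar_zero] at h
      norm_num at h
    rw [wit_values]
    simp [hx0, h]
  have hlb : ∀ f : ZMod q → ℝ, (∀ x ∉ A, f x ≤ 0) → PosFT f → (∑ x : ZMod q, f x) ≠ 0 →
      1 / Real.sqrt q ≤ f 0 / ∑ x : ZMod q, f x := by
    intro f hsupp hfpos hfsum
    exact lower_bound hq4 f (fun x hχ => hsupp x ((hA' x).mpr hχ)) hfpos hfsum
  have hwmem_lam : (1 / Real.sqrt q) ∈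
      lamSet {f : ZMod q → ℝ | f ≠ 0 ∧ ∀ x ∉ A, f x = 0} :=
    ⟨wit q 1, ⟨wit_one_ne_zero, hwit_supp⟩, fun γ => wit_one_posft hq4 γ,
      wit_one_sum_ne hq4, wit_one_ratio hq4⟩
  have hlb_lam : ∀ r ∈ lamSet {f : ZMod q → ℝ | f ≠ 0 ∧ ∀ x ∉ A, f x = 0},
      1 / Real.sqrt q ≤ r := by
    rintro r ⟨f, ⟨hf0, hsupp⟩, hfpos, hfsum, rfl⟩
    exact hlb f (fun x hx => le_of_eq (hsupp x hx)) hfpos hfsum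
  have hwmem_pm : (1 / Real.sqrt q) ∈
      lamSet {f : ZMod q → ℝ | f ≠ 0 ∧ (∀ x ∉ A, f x ≤ 0) ∧ ∀ x ∈ A, 0 ≤ f x} :=
    ⟨wit q 1, ⟨wit_one_ne_zero, fun x hx => le_of_eq (hwit_supp x hx),
      fun x _ => wit_one_nonneg x⟩, fun γ => wit_one_posft hq4 γ,
      wit_one_sum_ne hq4, wit_one_ratio hq4⟩
  have hlb_pm : ∀ r ∈ lamSet {f : ZMod q → ℝ | f ≠ 0 ∧ (∀ x ∉ A, f x ≤ 0) ∧ ∀ x ∈ A, 0 ≤ f x},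
      1 / Real.sqrt q ≤ r := by
    rintro r ⟨f, ⟨hf0, hsupp, hpos⟩, hfpos, hfsum, rfl⟩
    exact hlb f hsupp hfpos hfsum
  refine ⟨⟨?_, ?_⟩, ?_, ?_⟩
  · ext x
    rw [Set.mem_neg, hAmem, hAmem]
    have hχ : quadraticChar (ZMod q) (-x) = quadraticChar (ZMod q) x := by
      have hrw : (-x) = (-1) * x := by ring
      rw [hrw, map_mul]
      have h1 : quadraticChar (ZMod q) (-1 : ZMod q) = 1 :=
        (quadraticChar_one_iff_isSquare (neg_ne_zero.mpr one_ne_zero)).2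
          (ZMod.exists_sq_eq_neg_one_iff.2 (by omega))
      rw [h1, one_mul]
    rw [hχ, neg_eq_zero]
  · rw [hAmem]
    left
    rfl
  · exact le_antisymm (csInf_le ⟨_, hlb_lam⟩ hwmem_lam) (le_csInf ⟨_, hwmem_lam⟩ hlb_lam)
  · exact le_antisymm (csInf_le ⟨_, hlb_pm⟩ hwmem_pm) (le_csInf ⟨_, hwmem_pm⟩ hlb_pm)
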